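/- arXiv:1311.5675 — 4 statements merged into one kernel-verified Lean document; each statement's English description precedes it below -/
import Mathlib

section
/- Let A = ⨁_{p=0}^{2n} A^p be a graded-commutative ℝ-algebra with each A^p finite-dimensional over ℝ, and let ω ∈ A^2 be such that for every 0 ≤ p ≤ n the Lefschetz map A^p → A^{2n−p}, x ↦ ω^{n−p}·x, is a linear isomorphism. For s ≥ 1 set b_s := dim_ℝ A^s + dim_ℝ A^{s−1} (with A^s = 0 for s > 2n). Then b_1 ≤ b_2 ≤ … ≤ b_n and b_n = b_{n+1}. (Algebraic form of the Betti-number inequalities of Theorem 2.2(ii): the numbers b_s are the Betti numbers of a compact co-Kähler manifold built from a cohomologically Kählerian algebra.) -/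
/-- Algebraic form of the Betti-number inequalities of Theorem 2.2(ii): if
`A = ⨁_{p=0}^{2n} A^p` is a graded-commutative ℝ-algebra with finite-dimensional
graded pieces and `ω ∈ A^2` is such that all Lefschetz maps
`x ↦ ω^(n-p) * x : A^p → A^(2n-p)`, `0 ≤ p ≤ n`, are bijections, then setting
`b s := dim A^s + dim A^(s-1)` for `s ≥ 1`, one has
`b 1 ≤ b 2 ≤ … ≤ b n` and `b n = b (n+1)`. -/
theorem Betti_numbers_of_coKahler_from_cohomologically_Kahlerian
    {A : Type*} [Ring A] [Algebra ℝ A] (n : ℕ)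
    (𝒜 : ℕ → Submodule ℝ A) [GradedAlgebra 𝒜]
    (hfin : ∀ p : ℕ, FiniteDimensional ℝ (𝒜 p))
    (htop : ∀ p : ℕ, 2 * n < p → 𝒜 p = ⊥)
    (hcomm : ∀ (p q : ℕ) (x y : A), x ∈ 𝒜 p → y ∈ 𝒜 q →
      x * y = ((-1 : ℝ) ^ (p * q)) • (y * x))
    (ω : A) (hω : ω ∈ 𝒜 2)
    (hLef : ∀ p : ℕ, p ≤ n →
      Set.BijOn (fun x : A => ω ^ (n - p) * x) (𝒜 p) (𝒜 (2 * n - p))) :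
    (∀ s : ℕ, 1 ≤ s → s < n →
      Module.finrank ℝ (𝒜 s) + Module.finrank ℝ (𝒜 (s - 1)) ≤
        Module.finrank ℝ (𝒜 (s + 1)) + Module.finrank ℝ (𝒜 s)) ∧
    (1 ≤ n →
      Module.finrank ℝ (𝒜 n) + Module.finrank ℝ (𝒜 (n - 1)) =
        Module.finrank ℝ (𝒜 (n + 1)) + Module.finrank ℝ (𝒜 n)) := by
  haveI := hfin
  -- multiplication by ω lands in degree p+2
  have hmem : ∀ (p : ℕ) (x : A), x ∈ 𝒜 p → ω * x ∈ 𝒜 (p + 2) := by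
    intro p x hx
    have := SetLike.mul_mem_graded hω hx
    rwa [Nat.add_comm] at this
  -- the linear map A^p → A^(p+2)
  let L : ∀ p : ℕ, (𝒜 p) →ₗ[ℝ] (𝒜 (p + 2)) := fun p =>
    { toFun := fun x => ⟨ω * x.1, hmem p x.1 x.2⟩
      map_add' := by intro x y; ext; simp [mul_add]
      map_smul' := by intro c x; ext; simp [mul_smul_comm] }
  -- injectivity for p < n
  have hinj : ∀ p : ℕ, p < n → Function.Injective (L p) := by
    intro p hp
    rw [← LinearMap.ker_eq_bot, LinearMap.ker_eq_bot']
    intro x hx0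
    have hωx : ω * x.1 = 0 := congrArg Subtype.val hx0
    obtain ⟨k, hk⟩ : ∃ k, n - p = k + 1 := ⟨n - p - 1, by omega⟩
    have hpow : ω ^ (n - p) * x.1 = 0 := by
      rw [hk, pow_succ, mul_assoc, hωx, mul_zero]
    have h0 : (fun y : A => ω ^ (n - p) * y) x.1 =
        (fun y : A => ω ^ (n - p) * y) (0 : A) := by
      simp [hpow]
    have := (hLef p hp.le).injOn x.2 (Submodule.zero_mem _) h0
    exact Subtype.ext this
  have hle : ∀ p : ℕ, p < n →
      Module.finrank ℝ (𝒜 p) ≤ Module.finrank ℝ (𝒜 (p + 2)) :=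
    fun p hp => LinearMap.finrank_le_finrank_of_injective (hinj p hp)
  constructor
  · intro s h1 hs
    have h := hle (s - 1) (by omega)
    have heq : s - 1 + 2 = s + 1 := by omega
    rw [heq] at h
    omega
  · intro hn
    -- surjectivity at p = n - 1
    have hp : n - 1 < n := by omega
    have hsurj : Function.Surjective (L (n - 1)) := by
      intro y
      have hy : y.1 ∈ 𝒜 (2 * n - (n - 1)) := by
        have : (2 : ℕ) * n - (n - 1) = n - 1 + 2 := by omega
        rw [this]; exact y.2
      obtain ⟨x, hx, hxy⟩ := (hLef (n - 1) hp.le).surjOn hy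
      have hnp : n - (n - 1) = 1 := by omega
      rw [hnp, pow_one] at hxy
      exact ⟨⟨x, hx⟩, Subtype.ext hxy⟩
    have heq := LinearEquiv.finrank_eq
      (LinearEquiv.ofBijective (L (n - 1)) ⟨hinj (n - 1) hp, hsurj⟩)
    have h2 : n - 1 + 2 = n + 1 := by omega
    rw [h2] at heq
    omega
end

section
/- Let H = ⨁_{p≥0} H^p and G = ⨁_{p≥0} G^p be graded-commutative ℝ-algebras that both satisfy Property B. Then the graded tensor product H ⊗ G, with multiplication (x⊗y)·(x'⊗y') = (−1)^{|y||x'|} (xx')⊗(yy') and grading (H⊗G)^n = ⨁_{p+q=n} H^p ⊗ G^q, also satisfies Property B. (Proposition 3.4.) -/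
open TensorProduct DirectSum

noncomputable section AuxPropB

variable {A M : Type*} [Ring A] [Algebra ℝ A] (𝒜 : ℕ → Submodule ℝ A) [GradedAlgebra 𝒜]

/-- projection onto degree-`p` component, as a linear endomap. -/
def gproj (p : ℕ) : A →ₗ[ℝ] A :=
  (𝒜 p).subtype ∘ₗ (DirectSum.component ℝ ℕ (fun i => 𝒜 i) p) ∘ₗ
    (DirectSum.decomposeLinearEquiv 𝒜).toLinearMap

lemma gproj_apply (p : ℕ) (x : A) : gproj 𝒜 p x = (DirectSum.decompose 𝒜 x p : A) := rfl

lemma gproj_of_mem_self {p : ℕ} {x : A} (hx : x ∈ 𝒜 p) : gproj 𝒜 p x = x := by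
  rw [gproj_apply, DirectSum.decompose_of_mem_same 𝒜 hx]

lemma gproj_of_mem_ne {p a : ℕ} {x : A} (hx : x ∈ 𝒜 a) (h : a ≠ p) : gproj 𝒜 p x = 0 := by
  rw [gproj_apply, DirectSum.decompose_of_mem_ne 𝒜 hx h]

/-- the Koszul sign operator: multiplies the degree-`p` part by `(-1)^(q*p)`. -/
def geps (q : ℕ) : A →ₗ[ℝ] A :=
  (DirectSum.toModule ℝ ℕ A (fun p => ((-1 : ℝ) ^ (q * p)) • (𝒜 p).subtype)) ∘ₗ
    (DirectSum.decomposeLinearEquiv 𝒜).toLinearMap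

lemma geps_of_mem {q p : ℕ} {x : A} (hx : x ∈ 𝒜 p) :
    geps 𝒜 q x = ((-1 : ℝ) ^ (q * p)) • x := by
  have : (DirectSum.decompose 𝒜 x) = DirectSum.lof ℝ ℕ (fun i => 𝒜 i) p ⟨x, hx⟩ := by
    rw [DirectSum.lof_eq_of, DirectSum.decompose_of_mem 𝒜 hx]
  simp [geps, DirectSum.decomposeLinearEquiv_apply, this, DirectSum.toModule_lof]

lemma sum_gproj (x : A) : ∃ P : Finset ℕ, ∀ Q : Finset ℕ, P ⊆ Q →
    (∑ p ∈ Q, gproj 𝒜 p x) = x := by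
  classical
  refine ⟨(DirectSum.decompose 𝒜 x).support, fun Q hQ => ?_⟩
  have h1 : (∑ p ∈ Q, gproj 𝒜 p x) = ∑ p ∈ (DirectSum.decompose 𝒜 x).support, gproj 𝒜 p x := by
    refine (Finset.sum_subset hQ ?_).symm
    intro i _ hi
    rw [gproj_apply]
    rw [DFinsupp.notMem_support_iff] at hi
    rw [hi]; rfl
  rw [h1]
  simpa [gproj_apply] using DirectSum.sum_support_decompose 𝒜 x

/-- equality of linear maps can be checked on homogeneous elements. -/
lemma ext_homog [AddCommGroup M] [Module ℝ M] {T₁ T₂ : A →ₗ[ℝ] M}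
    (h : ∀ p : ℕ, ∀ x ∈ 𝒜 p, T₁ x = T₂ x) (x : A) : T₁ x = T₂ x := by
  classical
  rw [← DirectSum.sum_support_decompose 𝒜 x, map_sum, map_sum]
  exact Finset.sum_congr rfl fun i _ => h i _ (SetLike.coe_mem _)

variable {M N : Type*} [AddCommGroup M] [Module ℝ M] [AddCommGroup N] [Module ℝ N]

/-- `ν ⊗ id` collapsing map. -/
def lmapL (ν : M →ₗ[ℝ] ℝ) : M ⊗[ℝ] N →ₗ[ℝ] N :=
  (TensorProduct.lid ℝ N).toLinearMap ∘ₗ TensorProduct.map ν LinearMap.id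

/-- `id ⊗ ν` collapsing map. -/
def lmapR (ν : N →ₗ[ℝ] ℝ) : M ⊗[ℝ] N →ₗ[ℝ] M :=
  (TensorProduct.rid ℝ M).toLinearMap ∘ₗ TensorProduct.map LinearMap.id ν

@[simp] lemma lmapL_tmul (ν : M →ₗ[ℝ] ℝ) (x : M) (y : N) :
    lmapL ν (x ⊗ₜ[ℝ] y) = ν x • y := by simp [lmapL]

@[simp] lemma lmapR_tmul (ν : N →ₗ[ℝ] ℝ) (x : M) (y : N) :
    lmapR ν (x ⊗ₜ[ℝ] y) = ν y • x := by simp [lmapR]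

lemma lmapL_comp (ν : M →ₗ[ℝ] ℝ) (T : M →ₗ[ℝ] M) :
    (lmapL (ν ∘ₗ T) : M ⊗[ℝ] N →ₗ[ℝ] N)
      = (lmapL ν) ∘ₗ (TensorProduct.map T LinearMap.id) := by
  apply TensorProduct.ext'
  intro x y
  simp

lemma lmapR_comp (ν : N →ₗ[ℝ] ℝ) (T : N →ₗ[ℝ] N) :
    (lmapR (ν ∘ₗ T) : M ⊗[ℝ] N →ₗ[ℝ] M)
      = (lmapR ν) ∘ₗ (TensorProduct.map LinearMap.id T) := by
  apply TensorProduct.ext'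
  intro x y
  simp

lemma sep_left (u : M ⊗[ℝ] N) (h : ∀ ν : M →ₗ[ℝ] ℝ, lmapL ν u = 0) : u = 0 := by
  classical
  let b := Module.Basis.ofVectorSpace ℝ M
  let c := Module.Basis.ofVectorSpace ℝ N
  let B := b.tensorProduct c
  have key : ∀ (i : _) (j : _),
      B.coord (i, j) = (c.coord j) ∘ₗ lmapL (b.coord i) := by
    intro i j
    apply TensorProduct.ext'
    intro x y
    simp [B, Module.Basis.coord_apply, Module.Basis.tensorProduct_repr_tmul_apply, smul_eq_mul, mul_comm]
  have h0 : ∀ ij, B.repr u ij = 0 := by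
    rintro ⟨i, j⟩
    have := DFunLike.congr_fun (key i j) u
    simp only [Module.Basis.coord_apply, LinearMap.comp_apply] at this
    rw [this, h (b.coord i)]
    simp
  have : B.repr u = 0 := Finsupp.ext h0
  have := B.repr.injective (by simpa using this)
  simpa using this

lemma sep_right (u : M ⊗[ℝ] N) (h : ∀ ν : N →ₗ[ℝ] ℝ, lmapR ν u = 0) : u = 0 := by
  classical
  let b := Module.Basis.ofVectorSpace ℝ M
  let c := Module.Basis.ofVectorSpace ℝ N
  let B := b.tensorProduct c
  have key : ∀ (i : _) (j : _),
      B.coord (i, j) = (b.coord i) ∘ₗ lmapR (c.coord j) := by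
    intro i j
    apply TensorProduct.ext'
    intro x y
    simp [B, Module.Basis.coord_apply, Module.Basis.tensorProduct_repr_tmul_apply, smul_eq_mul, mul_comm]
  have h0 : ∀ ij, B.repr u ij = 0 := by
    rintro ⟨i, j⟩
    have := DFunLike.congr_fun (key i j) u
    simp only [Module.Basis.coord_apply, LinearMap.comp_apply] at this
    rw [this, h (c.coord j)]
    simp
  have : B.repr u = 0 := Finsupp.ext h0
  have := B.repr.injective (by simpa using this)
  simpa using this

lemma tensor_zero_of_projL {N : Type*} [AddCommGroup N] [Module ℝ N] (u : A ⊗[ℝ] N)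
    (h : ∀ p : ℕ, TensorProduct.map (gproj 𝒜 p) (LinearMap.id) u = 0) : u = 0 := by
  classical
  obtain ⟨S, hS⟩ := TensorProduct.exists_finset u
  choose P hPs using sum_gproj 𝒜
  set Q : Finset ℕ := S.biUnion (fun s => P s.1) with hQdef
  have key : (∑ p ∈ Q, TensorProduct.map (gproj 𝒜 p) (LinearMap.id) u) = u := by
    conv_lhs => rw [hS]
    simp only [map_sum, TensorProduct.map_tmul, LinearMap.id_coe, id_eq]
    rw [Finset.sum_comm]
    conv_rhs => rw [hS]
    refine Finset.sum_congr rfl fun s hs => ?_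
    rw [← TensorProduct.sum_tmul, hPs s.1 Q (Finset.subset_biUnion_of_mem (fun s => P s.1) hs)]
  rw [← key]
  exact Finset.sum_eq_zero fun p _ => h p

lemma tensor_zero_of_projR {N : Type*} [AddCommGroup N] [Module ℝ N] (u : N ⊗[ℝ] A)
    (h : ∀ q : ℕ, TensorProduct.map (LinearMap.id) (gproj 𝒜 q) u = 0) : u = 0 := by
  classical
  obtain ⟨S, hS⟩ := TensorProduct.exists_finset u
  choose P hPs using sum_gproj 𝒜
  set Q : Finset ℕ := S.biUnion (fun s => P s.2) with hQdef
  have key : (∑ q ∈ Q, TensorProduct.map (LinearMap.id) (gproj 𝒜 q) u) = u := by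
    conv_lhs => rw [hS]
    simp only [map_sum, TensorProduct.map_tmul, LinearMap.id_coe, id_eq]
    rw [Finset.sum_comm]
    conv_rhs => rw [hS]
    refine Finset.sum_congr rfl fun s hs => ?_
    rw [← TensorProduct.tmul_sum, hPs s.2 Q (Finset.subset_biUnion_of_mem (fun s => P s.2) hs)]
  rw [← key]
  exact Finset.sum_eq_zero fun q _ => h q

lemma neg_one_pow_shift {a c : ℕ} (z : M) :
    ((-1 : ℝ) ^ (a + 2 * c)) • z = ((-1 : ℝ) ^ a) • z := by
  rw [pow_add, pow_mul, neg_one_sq, one_pow, mul_one]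

end AuxPropB

/-- `θ` is a graded derivation of negative degree `-k` of the graded algebra
`C = ⨁_p C^p` (with grading `𝒞`): it lowers degree by `k` (killing degrees
below `k`) and satisfies the graded Leibniz rule
`θ(xy) = θ(x)y + (-1)^(k·p) x θ(y)` for homogeneous `x` of degree `p`. -/
structure IsGradedDerivation {C : Type*} [Ring C] [Algebra ℝ C]
    (𝒞 : ℕ → Submodule ℝ C) (k : ℕ) (θ : C →ₗ[ℝ] C) : Prop where
  mem : ∀ p : ℕ, ∀ x ∈ 𝒞 p, k ≤ p → θ x ∈ 𝒞 (p - k)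
  low : ∀ p : ℕ, ∀ x ∈ 𝒞 p, p < k → θ x = 0
  leibniz : ∀ p : ℕ, ∀ x ∈ 𝒞 p, ∀ y : C,
    θ (x * y) = θ x * y + ((-1 : ℝ) ^ (k * p)) • (x * θ y)

/-- A graded algebra `C` (with grading `𝒞`) has Property B if every graded
derivation of negative degree vanishing on `C^1` is zero. -/
def HasPropertyB {C : Type*} [Ring C] [Algebra ℝ C]
    (𝒞 : ℕ → Submodule ℝ C) : Prop :=
  ∀ k : ℕ, 1 ≤ k → ∀ θ : C →ₗ[ℝ] C, IsGradedDerivation 𝒞 k θ →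
    (∀ x ∈ 𝒞 1, θ x = 0) → θ = 0

/-- Proposition 3.4: if `H` and `G` are graded-commutative ℝ-algebras with
Property B, then their graded tensor product `H ⊗ G` (with the Koszul-sign
multiplication and the total grading) also has Property B.  Here the graded
tensor product is axiomatized: `C` is a graded algebra equipped with
degree-preserving algebra maps `f : H → C` and `g : G → C` whose images commute
up to Koszul sign, such that `x ⊗ y ↦ f x * g y` is a linear bijection
`H ⊗[ℝ] G ≃ C` and the grading of `C` is generated by the products of
homogeneous elements. -/
theorem propertyB_of_graded_tensor_product
    {H G C : Type*} [Ring H] [Algebra ℝ H] [Ring G] [Algebra ℝ G]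
    [Ring C] [Algebra ℝ C]
    (𝒜 : ℕ → Submodule ℝ H) [GradedAlgebra 𝒜]
    (ℬ : ℕ → Submodule ℝ G) [GradedAlgebra ℬ]
    (𝒞 : ℕ → Submodule ℝ C) [GradedAlgebra 𝒞]
    (hcommH : ∀ (p q : ℕ) (x y : H), x ∈ 𝒜 p → y ∈ 𝒜 q →
      x * y = ((-1 : ℝ) ^ (p * q)) • (y * x))
    (hcommG : ∀ (p q : ℕ) (x y : G), x ∈ ℬ p → y ∈ ℬ q →
      x * y = ((-1 : ℝ) ^ (p * q)) • (y * x))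
    (f : H →ₐ[ℝ] C) (g : G →ₐ[ℝ] C)
    (hf : ∀ p : ℕ, ∀ x ∈ 𝒜 p, f x ∈ 𝒞 p)
    (hg : ∀ q : ℕ, ∀ y ∈ ℬ q, g y ∈ 𝒞 q)
    (hkoszul : ∀ (p q : ℕ) (x : H) (y : G), x ∈ 𝒜 p → y ∈ ℬ q →
      g y * f x = ((-1 : ℝ) ^ (p * q)) • (f x * g y))
    (hbij : Function.Bijective
      (TensorProduct.lift
        (((LinearMap.mul ℝ C).comp f.toLinearMap).compl₂ g.toLinearMap)))
    (hgrade : ∀ m : ℕ, 𝒞 m =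
      ⨆ p : ℕ, ⨆ q : ℕ, ⨆ _ : p + q = m,
        Submodule.span ℝ {z : C | ∃ x ∈ 𝒜 p, ∃ y ∈ ℬ q, z = f x * g y})
    (hH : HasPropertyB 𝒜) (hG : HasPropertyB ℬ) :
    HasPropertyB 𝒞 := by
  classical
  intro k hk θ hθ hθ1
  set Φ := TensorProduct.lift (((LinearMap.mul ℝ C).comp f.toLinearMap).compl₂ g.toLinearMap)
    with hΦdef
  set e : (H ⊗[ℝ] G) ≃ₗ[ℝ] C := LinearEquiv.ofBijective Φ hbij with hedef
  have he : ∀ (x : H) (y : G), e (x ⊗ₜ[ℝ] y) = f x * g y := by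
    intro x y
    show Φ (x ⊗ₜ[ℝ] y) = f x * g y
    simp [hΦdef]
  have hesymm : ∀ (x : H) (y : G), e.symm (f x * g y) = x ⊗ₜ[ℝ] y := by
    intro x y
    rw [← he x y, LinearEquiv.symm_apply_apply]
  set S : Set C := {z | ∃ p x, x ∈ 𝒜 p ∧ ∃ q y, y ∈ ℬ q ∧ z = f x * g y} with hSdef
  have hgen : ∀ (x : H) (y : G), f x * g y ∈ Submodule.span ℝ S := by
    intro x y
    rw [← DirectSum.sum_support_decompose 𝒜 x, ← DirectSum.sum_support_decompose ℬ y,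
      map_sum, map_sum, Finset.sum_mul]
    refine Submodule.sum_mem _ fun p _ => ?_
    rw [Finset.mul_sum]
    refine Submodule.sum_mem _ fun q _ => ?_
    exact Submodule.subset_span ⟨p, _, SetLike.coe_mem _, q, _, SetLike.coe_mem _, rfl⟩
  have hspan : ∀ c : C, c ∈ Submodule.span ℝ S := by
    intro c
    obtain ⟨u, rfl⟩ := hbij.2 c
    induction u using TensorProduct.induction_on with
    | zero => simpa using Submodule.zero_mem _
    | tmul x y =>
        have : Φ (x ⊗ₜ[ℝ] y) = f x * g y := he x y
        rw [this]
        exact hgen x y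
    | add a b ha hb => rw [map_add]; exact Submodule.add_mem _ ha hb
  -- the two collapsing maps
  set LC : (H →ₗ[ℝ] ℝ) → (C →ₗ[ℝ] G) := fun ν => lmapL ν ∘ₗ e.symm.toLinearMap with hLCdef
  set RC : (G →ₗ[ℝ] ℝ) → (C →ₗ[ℝ] H) := fun ν => lmapR ν ∘ₗ e.symm.toLinearMap with hRCdef
  have hLC_apply : ∀ (ν : H →ₗ[ℝ] ℝ) (x : H) (y : G), LC ν (f x * g y) = ν x • y := by
    intro ν x y
    simp only [hLCdef, LinearMap.comp_apply, LinearEquiv.coe_toLinearMap, hesymm, lmapL_tmul]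
  have hRC_apply : ∀ (ν : G →ₗ[ℝ] ℝ) (x : H) (y : G), RC ν (f x * g y) = ν y • x := by
    intro ν x y
    simp only [hRCdef, LinearMap.comp_apply, LinearEquiv.coe_toLinearMap, hesymm, lmapR_tmul]
  -- multiplication lemmas for the collapsing maps
  have hL_mul_right : ∀ (ν : H →ₗ[ℝ] ℝ) (y' : G) (c : C), LC ν (c * g y') = LC ν c * y' := by
    intro ν y' c
    have heq : Set.EqOn (LC ν ∘ₗ LinearMap.mulRight ℝ (g y'))
        ((LinearMap.mulRight ℝ y') ∘ₗ LC ν) S := by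
      rintro z ⟨p, x, hx, q, y, hy, rfl⟩
      simp only [LinearMap.comp_apply, LinearMap.mulRight_apply]
      rw [mul_assoc, ← map_mul, hLC_apply, hLC_apply, smul_mul_assoc]
    simpa only [LinearMap.comp_apply, LinearMap.mulRight_apply] using
      LinearMap.eqOn_span heq (hspan c)
  have hL_gy_left : ∀ (q₀ : ℕ) (y : G), y ∈ ℬ q₀ → ∀ (p : ℕ) (ν : H →ₗ[ℝ] ℝ),
      (∀ a : ℕ, a ≠ p → ∀ x ∈ 𝒜 a, ν x = 0) →
      ∀ c : C, LC ν (g y * c) = ((-1 : ℝ) ^ (p * q₀)) • (y * LC ν c) := by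
    intro q₀ y hy p ν hν c
    have heq : Set.EqOn (LC ν ∘ₗ LinearMap.mulLeft ℝ (g y))
        ((((-1 : ℝ) ^ (p * q₀)) • ((LinearMap.mulLeft ℝ y) ∘ₗ LC ν) : C →ₗ[ℝ] G)) S := by
      rintro z ⟨a, x, hx, b, y', hy', rfl⟩
      simp only [LinearMap.comp_apply, LinearMap.mulLeft_apply, LinearMap.smul_apply]
      rw [← mul_assoc, hkoszul a q₀ x y hx hy, smul_mul_assoc, mul_assoc, ← map_mul,
        map_smul, hLC_apply, hLC_apply, mul_smul_comm]
      by_cases hap : a = p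
      · subst hap; rw [smul_comm]
      · rw [hν a hap x hx]; simp
    simpa only [LinearMap.comp_apply, LinearMap.mulLeft_apply, LinearMap.smul_apply] using
      LinearMap.eqOn_span heq (hspan c)
  have hR_mul_left : ∀ (ν : G →ₗ[ℝ] ℝ) (x' : H) (c : C), RC ν (f x' * c) = x' * RC ν c := by
    intro ν x' c
    have heq : Set.EqOn (RC ν ∘ₗ LinearMap.mulLeft ℝ (f x'))
        ((LinearMap.mulLeft ℝ x') ∘ₗ RC ν) S := by
      rintro z ⟨p, x, hx, q, y, hy, rfl⟩
      simp only [LinearMap.comp_apply, LinearMap.mulLeft_apply]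
      rw [← mul_assoc, ← map_mul, hRC_apply, hRC_apply, mul_smul_comm]
    simpa only [LinearMap.comp_apply, LinearMap.mulLeft_apply] using
      LinearMap.eqOn_span heq (hspan c)
  have hR_fx_right : ∀ (p₀ : ℕ) (x' : H), x' ∈ 𝒜 p₀ → ∀ (q : ℕ) (ν : G →ₗ[ℝ] ℝ),
      (∀ b : ℕ, b ≠ q → ∀ y ∈ ℬ b, ν y = 0) →
      ∀ c : C, RC ν (c * f x') = ((-1 : ℝ) ^ (p₀ * q)) • (RC ν c * x') := by
    intro p₀ x' hx' q ν hν c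
    have heq : Set.EqOn (RC ν ∘ₗ LinearMap.mulRight ℝ (f x'))
        ((((-1 : ℝ) ^ (p₀ * q)) • ((LinearMap.mulRight ℝ x') ∘ₗ RC ν) : C →ₗ[ℝ] H)) S := by
      rintro z ⟨a, x, hx, b, y, hy, rfl⟩
      simp only [LinearMap.comp_apply, LinearMap.mulRight_apply, LinearMap.smul_apply]
      rw [mul_assoc, hkoszul p₀ b x' y hx' hy, mul_smul_comm, ← mul_assoc, ← map_mul,
        map_smul, hRC_apply, hRC_apply, smul_mul_assoc]
      by_cases hbq : b = q
      · subst hbq; rw [smul_comm]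
      · rw [hν b hbq y hy]; simp
    simpa only [LinearMap.comp_apply, LinearMap.mulRight_apply, LinearMap.smul_apply] using
      LinearMap.eqOn_span heq (hspan c)
  -- grading lemmas for the collapsing maps
  have hLC_grade : ∀ (n p : ℕ) (ν : H →ₗ[ℝ] ℝ), (∀ a : ℕ, a ≠ p → ∀ x ∈ 𝒜 a, ν x = 0) →
      ∀ c ∈ 𝒞 n, LC ν c ∈ ℬ (n - p) := by
    intro n p ν hν c hc
    have hle : 𝒞 n ≤ Submodule.comap (LC ν) (ℬ (n - p)) := by
      rw [hgrade n]
      refine iSup_le fun p' => iSup_le fun q' => iSup_le fun hpq => ?_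
      rw [Submodule.span_le]
      rintro z ⟨x, hx, y, hy, rfl⟩
      simp only [SetLike.mem_coe, Submodule.mem_comap, hLC_apply]
      by_cases hap : p' = p
      · subst hap
        have hq' : q' = n - p' := by omega
        exact Submodule.smul_mem _ _ (hq' ▸ hy)
      · rw [hν p' hap x hx]
        simp only [zero_smul]
        exact Submodule.zero_mem _
    exact hle hc
  have hLC_grade_zero : ∀ (n p : ℕ) (ν : H →ₗ[ℝ] ℝ), (∀ a : ℕ, a ≠ p → ∀ x ∈ 𝒜 a, ν x = 0) →
      n < p → ∀ c ∈ 𝒞 n, LC ν c = 0 := by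
    intro n p ν hν hnp c hc
    have hle : 𝒞 n ≤ LinearMap.ker (LC ν) := by
      rw [hgrade n]
      refine iSup_le fun p' => iSup_le fun q' => iSup_le fun hpq => ?_
      rw [Submodule.span_le]
      rintro z ⟨x, hx, y, hy, rfl⟩
      simp only [SetLike.mem_coe, LinearMap.mem_ker, hLC_apply]
      rw [hν p' (by omega) x hx, zero_smul]
    exact hle hc
  have hRC_grade : ∀ (n q : ℕ) (ν : G →ₗ[ℝ] ℝ), (∀ b : ℕ, b ≠ q → ∀ y ∈ ℬ b, ν y = 0) →
      ∀ c ∈ 𝒞 n, RC ν c ∈ 𝒜 (n - q) := by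
    intro n q ν hν c hc
    have hle : 𝒞 n ≤ Submodule.comap (RC ν) (𝒜 (n - q)) := by
      rw [hgrade n]
      refine iSup_le fun p' => iSup_le fun q' => iSup_le fun hpq => ?_
      rw [Submodule.span_le]
      rintro z ⟨x, hx, y, hy, rfl⟩
      simp only [SetLike.mem_coe, Submodule.mem_comap, hRC_apply]
      by_cases hbq : q' = q
      · subst hbq
        have hp' : p' = n - q' := by omega
        exact Submodule.smul_mem _ _ (hp' ▸ hx)
      · rw [hν q' hbq y hy]
        simp only [zero_smul]
        exact Submodule.zero_mem _
    exact hle hc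
  have hRC_grade_zero : ∀ (n q : ℕ) (ν : G →ₗ[ℝ] ℝ), (∀ b : ℕ, b ≠ q → ∀ y ∈ ℬ b, ν y = 0) →
      n < q → ∀ c ∈ 𝒞 n, RC ν c = 0 := by
    intro n q ν hν hnq c hc
    have hle : 𝒞 n ≤ LinearMap.ker (RC ν) := by
      rw [hgrade n]
      refine iSup_le fun p' => iSup_le fun q' => iSup_le fun hpq => ?_
      rw [Submodule.span_le]
      rintro z ⟨x, hx, y, hy, rfl⟩
      simp only [SetLike.mem_coe, LinearMap.mem_ker, hRC_apply]
      rw [hν q' (by omega) y hy, zero_smul]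
    exact hle hc
  -- Step A : θ ∘ g = 0
  have stepA : ∀ y : G, θ (g y) = 0 := by
    have mainA : ∀ (p : ℕ) (ν₀ : H →ₗ[ℝ] ℝ) (y : G),
        LC (ν₀ ∘ₗ gproj 𝒜 p) (θ (g y)) = 0 := by
      intro p ν₀ y
      set ν : H →ₗ[ℝ] ℝ := ν₀ ∘ₗ gproj 𝒜 p with hνdef
      have hν : ∀ a : ℕ, a ≠ p → ∀ x ∈ 𝒜 a, ν x = 0 := by
        intro a ha x hx
        simp [hνdef, LinearMap.comp_apply, gproj_of_mem_ne 𝒜 hx ha]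
      set θL : G →ₗ[ℝ] G := (LC ν) ∘ₗ θ ∘ₗ g.toLinearMap with hθLdef
      have happ : ∀ y : G, θL y = LC ν (θ (g y)) := fun y => rfl
      have hder : IsGradedDerivation ℬ (k + p) θL := by
        constructor
        · intro q y hy hkpq
          have h1 : θ (g y) ∈ 𝒞 (q - k) := hθ.mem q (g y) (hg q y hy) (by omega)
          have h2 := hLC_grade (q - k) p ν hν _ h1
          rw [happ, ← Nat.sub_sub]
          exact h2
        · intro q y hy hq
          rw [happ]
          by_cases hqk : q < k
          · rw [hθ.low q (g y) (hg q y hy) hqk, map_zero]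
          · have h1 : θ (g y) ∈ 𝒞 (q - k) := hθ.mem q (g y) (hg q y hy) (by omega)
            exact hLC_grade_zero (q - k) p ν hν (by omega) _ h1
        · intro q y hy y'
          have hlb := hθ.leibniz q (g y) (hg q y hy) (g y')
          show LC ν (θ (g (y * y'))) = LC ν (θ (g y)) * y'
            + ((-1 : ℝ) ^ ((k + p) * q)) • (y * LC ν (θ (g y')))
          rw [map_mul, hlb, map_add, map_smul, hL_mul_right ν y' (θ (g y)),
            hL_gy_left q y hy p ν hν (θ (g y')), smul_smul, ← pow_add]
          have hexp : k * q + p * q = (k + p) * q := by ring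
          rw [hexp]
      have hvan : ∀ y ∈ ℬ 1, θL y = 0 := by
        intro y hy
        rw [happ, hθ1 (g y) (hg 1 y hy), map_zero]
      have hzero := hG (k + p) (by omega) θL hder hvan
      have := DFunLike.congr_fun hzero y
      rwa [happ] at this
    intro y
    have hz : e.symm (θ (g y)) = 0 := by
      apply tensor_zero_of_projL 𝒜
      intro p
      apply sep_left
      intro ν₀
      have h1 := mainA p ν₀ y
      rw [hLCdef] at h1
      simp only [LinearMap.comp_apply, LinearEquiv.coe_toLinearMap] at h1
      rw [lmapL_comp] at h1
      simpa only [LinearMap.comp_apply] using h1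
    have h2 := congrArg e hz
    rw [LinearEquiv.apply_symm_apply] at h2
    rw [h2]
    exact (LinearEquiv.map_eq_zero_iff e).mpr rfl
  -- Step B : θ ∘ f = 0
  have stepB : ∀ x : H, θ (f x) = 0 := by
    have mainB : ∀ (q : ℕ) (ν₀ : G →ₗ[ℝ] ℝ) (x : H),
        RC (ν₀ ∘ₗ gproj ℬ q) (θ (f x)) = 0 := by
      intro q ν₀ x
      set ν : G →ₗ[ℝ] ℝ := ν₀ ∘ₗ gproj ℬ q with hνdef
      have hν : ∀ b : ℕ, b ≠ q → ∀ y ∈ ℬ b, ν y = 0 := by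
        intro b hb y hy
        simp [hνdef, LinearMap.comp_apply, gproj_of_mem_ne ℬ hy hb]
      set θR : H →ₗ[ℝ] H := (RC ν) ∘ₗ θ ∘ₗ f.toLinearMap with hθRdef
      have happ : ∀ x : H, θR x = RC ν (θ (f x)) := fun _ => rfl
      set θE : H →ₗ[ℝ] H := θR ∘ₗ geps 𝒜 q with hθEdef
      have happE : ∀ (p : ℕ) (x : H), x ∈ 𝒜 p → θE x = ((-1 : ℝ) ^ (q * p)) • θR x := by
        intro p x hx
        show θR (geps 𝒜 q x) = _
        rw [geps_of_mem 𝒜 hx, map_smul]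
      have hRleib : ∀ (p p' : ℕ) (x x' : H), x ∈ 𝒜 p → x' ∈ 𝒜 p' →
          θR (x * x') = ((-1 : ℝ) ^ (p' * q)) • (θR x * x')
            + ((-1 : ℝ) ^ (k * p)) • (x * θR x') := by
        intro p p' x x' hx hx'
        have hlb := hθ.leibniz p (f x) (hf p x hx) (f x')
        rw [happ, map_mul, hlb, map_add, map_smul,
          hR_fx_right p' x' hx' q ν hν (θ (f x)), hR_mul_left ν x (θ (f x'))]
        rfl
      have hder : IsGradedDerivation 𝒜 (k + q) θE := by
        constructor
        · intro p x hx hkq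
          rw [happE p x hx]
          refine Submodule.smul_mem _ _ ?_
          have h1 : θ (f x) ∈ 𝒞 (p - k) := hθ.mem p (f x) (hf p x hx) (by omega)
          have h2 := hRC_grade (p - k) q ν hν _ h1
          rw [happ, ← Nat.sub_sub]
          exact h2
        · intro p x hx hp
          rw [happE p x hx, happ]
          by_cases hpk : p < k
          · rw [hθ.low p (f x) (hf p x hx) hpk, map_zero, smul_zero]
          · rw [hRC_grade_zero (p - k) q ν hν (by omega) _
              (hθ.mem p (f x) (hf p x hx) (by omega)), smul_zero]
        · intro p x hx u
          have hhom : ∀ (p' : ℕ) (x' : H), x' ∈ 𝒜 p' →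
              θE (x * x') = θE x * x' + ((-1 : ℝ) ^ ((k + q) * p)) • (x * θE x') := by
            intro p' x' hx'
            have hmul : x * x' ∈ 𝒜 (p + p') := SetLike.mul_mem_graded hx hx'
            rw [happE (p + p') _ hmul, hRleib p p' x x' hx hx', happE p x hx, happE p' x' hx']
            rw [smul_add, smul_smul, smul_smul, ← pow_add, ← pow_add, smul_mul_assoc,
              mul_smul_comm, smul_smul, ← pow_add]
            congr 1
            · have h3 : q * (p + p') + p' * q = q * p + 2 * (q * p') := by ring
              rw [h3, neg_one_pow_shift]
            · have h4 : q * (p + p') + k * p = (k + q) * p + q * p' := by ring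
              rw [h4]
          have hext := ext_homog (A := H) 𝒜
            (T₁ := θE ∘ₗ LinearMap.mulLeft ℝ x)
            (T₂ := LinearMap.mulLeft ℝ (θE x)
              + ((-1 : ℝ) ^ ((k + q) * p)) • (LinearMap.mulLeft ℝ x ∘ₗ θE))
            (fun p' x' hx' => by
              simp only [LinearMap.comp_apply, LinearMap.mulLeft_apply, LinearMap.add_apply,
                LinearMap.smul_apply]
              exact hhom p' x' hx') u
          simpa only [LinearMap.comp_apply, LinearMap.mulLeft_apply, LinearMap.add_apply,
            LinearMap.smul_apply] using hext
      have hvan : ∀ x ∈ 𝒜 1, θE x = 0 := by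
        intro x hx
        rw [happE 1 x hx, happ, hθ1 (f x) (hf 1 x hx), map_zero, smul_zero]
      have hzero := hH (k + q) (by omega) θE hder hvan
      have hθR : ∀ x : H, θR x = 0 := by
        have hhom : ∀ p, ∀ x ∈ 𝒜 p, θR x = 0 := by
          intro p x hx
          have h1 : θE x = 0 := by rw [hzero]; rfl
          rw [happE p x hx] at h1
          have h2 := congrArg (fun z => ((-1 : ℝ) ^ (q * p)) • z) h1
          simp only [smul_smul, ← pow_add, smul_zero] at h2
          have h3 : q * p + q * p = 0 + 2 * (q * p) := by ring
          rwa [h3, neg_one_pow_shift, pow_zero, one_smul] at h2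
        intro x
        have := ext_homog (A := H) 𝒜 (T₁ := θR) (T₂ := 0)
          (fun p x hx => by simpa using hhom p x hx) x
        simpa using this
      have hfin := hθR x
      rwa [happ] at hfin
    intro x
    have hz : e.symm (θ (f x)) = 0 := by
      apply tensor_zero_of_projR ℬ
      intro q
      apply sep_right
      intro ν₀
      have h1 := mainB q ν₀ x
      rw [hRCdef] at h1
      simp only [LinearMap.comp_apply, LinearEquiv.coe_toLinearMap] at h1
      rw [lmapR_comp] at h1
      simpa only [LinearMap.comp_apply] using h1
    have h2 := congrArg e hz
    rw [LinearEquiv.apply_symm_apply] at h2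
    rw [h2]
    exact (LinearEquiv.map_eq_zero_iff e).mpr rfl
  -- conclusion
  have hzeroS : Set.EqOn θ (0 : C →ₗ[ℝ] C) S := by
    rintro z ⟨p, x, hx, q, y, hy, rfl⟩
    have hlb := hθ.leibniz p (f x) (hf p x hx) (g y)
    simp only [LinearMap.zero_apply]
    rw [hlb, stepB x, stepA y, zero_mul, mul_zero, smul_zero, add_zero]
  apply LinearMap.ext
  intro c
  have hfin := LinearMap.eqOn_span hzeroS (hspan c)
  simpa using hfin
end

section
/- Let H = ⨁_{p≥0} H^p and G = ⨁_{p≥0} G^p be graded-commutative ℝ-algebras and suppose H satisfies Property B. Let θ be a graded derivation of negative degree of the graded tensor product H ⊗ G (with Koszul-sign multiplication) that vanishes on (H⊗G)^1 = H^1 ⊗ 1 + 1 ⊗ G^1. Then θ vanishes on the subalgebra H ⊗ 1. (Key step in the proof of Proposition 3.4.) -/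
open TensorProduct
open scoped DirectSum

/-- Apply a functional to the right factor of a tensor. -/
noncomputable def apR {M V : Type*} [AddCommGroup M] [Module ℝ M]
    [AddCommGroup V] [Module ℝ V] (μ : V →ₗ[ℝ] ℝ) : M ⊗[ℝ] V →ₗ[ℝ] M :=
  (TensorProduct.rid ℝ M).toLinearMap ∘ₗ LinearMap.lTensor M μ

@[simp] lemma apR_tmul {M V : Type*} [AddCommGroup M] [Module ℝ M]
    [AddCommGroup V] [Module ℝ V] (μ : V →ₗ[ℝ] ℝ) (m : M) (v : V) :
    apR μ (m ⊗ₜ[ℝ] v) = μ v • m := by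
  simp [apR]

lemma eq_zero_of_apR {M V : Type*} [AddCommGroup M] [Module ℝ M]
    [AddCommGroup V] [Module ℝ V] (u : M ⊗[ℝ] V)
    (h : ∀ μ : V →ₗ[ℝ] ℝ, apR μ u = 0) : u = 0 := by
  classical
  let b := Module.Basis.ofVectorSpace ℝ V
  let F : (M ⊗[ℝ] V) ≃ₗ[ℝ] (Module.Basis.ofVectorSpaceIndex ℝ V →₀ M) :=
    (LinearEquiv.lTensor M b.repr).trans (TensorProduct.finsuppScalarRight ℝ ℝ M _)
  have key : ∀ (u : M ⊗[ℝ] V) i, F u i = apR (b.coord i) u := by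
    intro u i
    induction u using TensorProduct.induction_on with
    | zero => simp
    | tmul m v =>
      simp [F, TensorProduct.finsuppScalarRight_apply_tmul_apply, Module.Basis.coord]
    | add x y hx hy =>
      simp only [map_add, Finsupp.add_apply, hx, hy]
  have : F u = 0 := by
    ext i
    simp [key, h]
  simpa using congrArg F.symm this

section Graded
variable {M G : Type*} [AddCommGroup M] [Module ℝ M]
    [AddCommGroup G] [Module ℝ G]
    (ℬ : ℕ → Submodule ℝ G) [DirectSum.Decomposition ℬ]

/-- The functional on `G` induced by a functional on the degree-`j` piece. -/
noncomputable def gradedFunc (j : ℕ) (μ : ℬ j →ₗ[ℝ] ℝ) : G →ₗ[ℝ] ℝ :=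
  μ ∘ₗ (DirectSum.component ℝ ℕ (fun i => ℬ i) j) ∘ₗ
    (DirectSum.decomposeLinearEquiv ℬ).toLinearMap

lemma gradedFunc_coe_same (j : ℕ) (μ : ℬ j →ₗ[ℝ] ℝ) (b : ℬ j) :
    gradedFunc ℬ j μ (b : G) = μ b := by
  simp only [gradedFunc, LinearMap.coe_comp, Function.comp_apply,
    LinearEquiv.coe_coe, DirectSum.decomposeLinearEquiv_apply,
    DirectSum.decompose_coe]
  rw [← DirectSum.apply_eq_component, DirectSum.of_eq_same]

lemma gradedFunc_coe_ne {j t : ℕ} (ht : t ≠ j) (μ : ℬ j →ₗ[ℝ] ℝ) (b : ℬ t) :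
    gradedFunc ℬ j μ (b : G) = 0 := by
  simp only [gradedFunc, LinearMap.coe_comp, Function.comp_apply,
    LinearEquiv.coe_coe, DirectSum.decomposeLinearEquiv_apply,
    DirectSum.decompose_coe]
  rw [← DirectSum.apply_eq_component, DirectSum.of_eq_of_ne _ _ _ ht.symm, map_zero]

lemma gradedFunc_apply (j : ℕ) (μ : ℬ j →ₗ[ℝ] ℝ) (b : G) :
    gradedFunc ℬ j μ b = μ (DirectSum.decompose ℬ b j) := rfl

lemma apR_decompose_sum (u : M ⊗[ℝ] G) :
    ∃ J : Finset ℕ, ∀ (lam : G →ₗ[ℝ] ℝ) (J' : Finset ℕ), J ⊆ J' →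
      apR lam u = ∑ j ∈ J', apR (gradedFunc ℬ j (lam ∘ₗ (ℬ j).subtype)) u := by
  classical
  induction u using TensorProduct.induction_on with
  | zero => exact ⟨∅, by simp⟩
  | tmul m b =>
    refine ⟨(DirectSum.decompose ℬ b).support, fun lam J' hJ => ?_⟩
    have hb : ∑ j ∈ J', ((DirectSum.decompose ℬ b j : ℬ j) : G) = b :=
      calc ∑ j ∈ J', ((DirectSum.decompose ℬ b j : ℬ j) : G)
          = ∑ j ∈ (DirectSum.decompose ℬ b).support,
              ((DirectSum.decompose ℬ b j : ℬ j) : G) :=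
            (Finset.sum_subset hJ (fun j _ hj => by
              rw [DFinsupp.notMem_support_iff.mp hj, Submodule.coe_zero])).symm
        _ = b := DirectSum.sum_support_decompose ℬ b
    have : lam b = ∑ j ∈ J', lam ((DirectSum.decompose ℬ b j : ℬ j) : G) := by
      rw [← map_sum]
      exact congrArg lam hb.symm
    simp only [apR_tmul, gradedFunc_apply, LinearMap.comp_apply, Submodule.subtype_apply]
    rw [this, Finset.sum_smul]
  | add x y hx hy =>
    obtain ⟨J₁, h₁⟩ := hx
    obtain ⟨J₂, h₂⟩ := hy
    refine ⟨J₁ ∪ J₂, fun lam J' hJ => ?_⟩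
    simp only [map_add]
    rw [h₁ lam J' (Finset.union_subset_iff.mp hJ).1,
      h₂ lam J' (Finset.union_subset_iff.mp hJ).2, Finset.sum_add_distrib]

lemma eq_zero_of_apR_graded (u : M ⊗[ℝ] G)
    (h : ∀ (j : ℕ) (μ : ℬ j →ₗ[ℝ] ℝ), apR (gradedFunc ℬ j μ) u = 0) : u = 0 := by
  refine eq_zero_of_apR u (fun lam => ?_)
  obtain ⟨J, hJ⟩ := apR_decompose_sum ℬ u
  rw [hJ lam J (subset_refl J)]
  exact Finset.sum_eq_zero (fun j _ => h j _)

end Graded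

section Main

variable {H G C : Type*} [Ring H] [Algebra ℝ H] [Ring G] [Algebra ℝ G]
    [Ring C] [Algebra ℝ C]
    (ℬ : ℕ → Submodule ℝ G) [DirectSum.Decomposition ℬ]

/-- Composite: pull back along `E`, apply a degree-`j` functional on the right. -/
noncomputable def PhiMap (E : (H ⊗[ℝ] G) ≃ₗ[ℝ] C) (j : ℕ) (μ : ℬ j →ₗ[ℝ] ℝ) :
    C →ₗ[ℝ] H :=
  apR (gradedFunc ℬ j μ) ∘ₗ E.symm.toLinearMap

variable (E : (H ⊗[ℝ] G) ≃ₗ[ℝ] C) (j : ℕ) (μ : ℬ j →ₗ[ℝ] ℝ)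

lemma PhiMap_apply (c : C) :
    PhiMap ℬ E j μ c = apR (gradedFunc ℬ j μ) (E.symm c) := rfl

lemma PhiMap_E (w : H ⊗[ℝ] G) :
    PhiMap ℬ E j μ (E w) = apR (gradedFunc ℬ j μ) w := by
  simp [PhiMap]

variable {f : H →ₐ[ℝ] C} {g : G →ₐ[ℝ] C}

lemma PhiMap_fg (hE : ∀ (x : H) (y : G), E (x ⊗ₜ[ℝ] y) = f x * g y)
    (x : H) (y : G) :
    PhiMap ℬ E j μ (f x * g y) = gradedFunc ℬ j μ y • x := by
  rw [← hE, PhiMap_E, apR_tmul]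

lemma PhiMap_left (hE : ∀ (x : H) (y : G), E (x ⊗ₜ[ℝ] y) = f x * g y)
    (x : H) (c : C) :
    PhiMap ℬ E j μ (f x * c) = x * PhiMap ℬ E j μ c := by
  obtain ⟨w, rfl⟩ : ∃ w, E w = c := E.surjective c
  induction w using TensorProduct.induction_on with
  | zero => rw [E.map_zero, mul_zero, map_zero]; simp
  | tmul a b =>
    rw [hE, ← mul_assoc, ← map_mul, PhiMap_fg ℬ E j μ hE, PhiMap_fg ℬ E j μ hE,
      mul_smul_comm]
  | add w₁ w₂ h₁ h₂ =>
    rw [map_add, mul_add, map_add, map_add, mul_add, h₁, h₂]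

lemma PhiMap_right (hE : ∀ (x : H) (y : G), E (x ⊗ₜ[ℝ] y) = f x * g y)
    (𝒜 : ℕ → Submodule ℝ H)
    (hkoszul : ∀ (p q : ℕ) (x : H) (y : G), x ∈ 𝒜 p → y ∈ ℬ q →
      g y * f x = ((-1 : ℝ) ^ (p * q)) • (f x * g y))
    {q : ℕ} {y : H} (hy : y ∈ 𝒜 q) (c : C) :
    PhiMap ℬ E j μ (c * f y) =
      ((-1 : ℝ) ^ (j * q)) • (PhiMap ℬ E j μ c * y) := by
  obtain ⟨w, rfl⟩ : ∃ w, E w = c := E.surjective c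
  induction w using TensorProduct.induction_on with
  | zero => rw [E.map_zero, zero_mul, map_zero]; simp
  | tmul a b =>
    induction b using DirectSum.Decomposition.inductionOn ℬ with
    | zero =>
      rw [tmul_zero, E.map_zero, zero_mul, map_zero]; simp
    | @homogeneous t b =>
      have h1 : E (a ⊗ₜ[ℝ] (b : G)) * f y =
          ((-1 : ℝ) ^ (q * t)) • (E ((a * y) ⊗ₜ[ℝ] (b : G))) := by
        rw [hE, hE, mul_assoc, hkoszul q t y b hy b.2, mul_smul_comm,
          ← mul_assoc, ← map_mul]
      rw [h1, map_smul, PhiMap_E, apR_tmul, PhiMap_E, apR_tmul, smul_mul_assoc]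
      rcases eq_or_ne t j with rfl | ht
      · rw [mul_comm q t]
      · rw [gradedFunc_coe_ne ℬ ht μ]; simp
    | add b₁ b₂ h₁ h₂ =>
      rw [tmul_add, map_add, add_mul, map_add, map_add, add_mul, smul_add,
        h₁, h₂]
  | add w₁ w₂ h₁ h₂ =>
    rw [map_add, add_mul, map_add, map_add, add_mul, smul_add, h₁, h₂]

variable (𝒜 : ℕ → Submodule ℝ H) (𝒞 : ℕ → Submodule ℝ C)

lemma PhiMap_grade_aux
    (hgrade : ∀ m : ℕ, 𝒞 m =
      ⨆ p : ℕ, ⨆ q : ℕ, ⨆ _ : p + q = m,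
        Submodule.span ℝ {z : C | ∃ x ∈ 𝒜 p, ∃ y ∈ ℬ q, z = f x * g y})
    (m : ℕ) (N : Submodule ℝ H)
    (hgen : ∀ (p q : ℕ) (x : H) (y : G), x ∈ 𝒜 p → y ∈ ℬ q → p + q = m →
      PhiMap ℬ E j μ (f x * g y) ∈ N) :
    ∀ z ∈ 𝒞 m, PhiMap ℬ E j μ z ∈ N := by
  intro z hz
  have hle : 𝒞 m ≤ N.comap (PhiMap ℬ E j μ) := by
    rw [hgrade m]
    refine iSup_le fun p => iSup_le fun q => iSup_le fun hpq =>
      Submodule.span_le.mpr ?_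
    rintro z ⟨x, hx, y, hy, rfl⟩
    exact hgen p q x y hx hy hpq
  exact hle hz

lemma PhiMap_grade1 (hE : ∀ (x : H) (y : G), E (x ⊗ₜ[ℝ] y) = f x * g y)
    (hgrade : ∀ m : ℕ, 𝒞 m =
      ⨆ p : ℕ, ⨆ q : ℕ, ⨆ _ : p + q = m,
        Submodule.span ℝ {z : C | ∃ x ∈ 𝒜 p, ∃ y ∈ ℬ q, z = f x * g y})
    (m : ℕ) {z : C} (hz : z ∈ 𝒞 m) :
    PhiMap ℬ E j μ z ∈ 𝒜 (m - j) := by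
  refine PhiMap_grade_aux ℬ E j μ 𝒜 𝒞 hgrade m (𝒜 (m - j)) ?_ z hz
  intro p q x y hx hy hpq
  rw [PhiMap_fg ℬ E j μ hE]
  rcases eq_or_ne q j with rfl | hq
  · have hpm : p = m - q := by omega
    exact Submodule.smul_mem _ _ (hpm ▸ hx)
  · rw [gradedFunc_coe_ne ℬ hq μ ⟨y, hy⟩, zero_smul]
    exact Submodule.zero_mem _

lemma PhiMap_grade2 (hE : ∀ (x : H) (y : G), E (x ⊗ₜ[ℝ] y) = f x * g y)
    (hgrade : ∀ m : ℕ, 𝒞 m =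
      ⨆ p : ℕ, ⨆ q : ℕ, ⨆ _ : p + q = m,
        Submodule.span ℝ {z : C | ∃ x ∈ 𝒜 p, ∃ y ∈ ℬ q, z = f x * g y})
    (m : ℕ) (hm : m < j) {z : C} (hz : z ∈ 𝒞 m) :
    PhiMap ℬ E j μ z = 0 := by
  have := PhiMap_grade_aux ℬ E j μ 𝒜 𝒞 hgrade m ⊥ ?_ z hz
  · simpa using this
  intro p q x y hx hy hpq
  have hq : q ≠ j := by omega
  rw [PhiMap_fg ℬ E j μ hE, gradedFunc_coe_ne ℬ hq μ ⟨y, hy⟩, zero_smul]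
  exact Submodule.zero_mem _

end Main

section Sign

variable {H : Type*} [Ring H] [Algebra ℝ H]
    (𝒜 : ℕ → Submodule ℝ H) [DirectSum.Decomposition 𝒜]

/-- The sign operator `x ↦ (-1)^(j p) x` on degree-`p` parts. -/
noncomputable def Smap (j : ℕ) : H →ₗ[ℝ] H :=
  (DirectSum.toModule ℝ ℕ H fun p => ((-1 : ℝ) ^ (j * p)) • (𝒜 p).subtype) ∘ₗ
    (DirectSum.decomposeLinearEquiv 𝒜).toLinearMap

lemma Smap_coe (j : ℕ) {p : ℕ} {x : H} (hx : x ∈ 𝒜 p) :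
    Smap 𝒜 j x = ((-1 : ℝ) ^ (j * p)) • x := by
  simp only [Smap, LinearMap.comp_apply, LinearEquiv.coe_coe,
    DirectSum.decomposeLinearEquiv_apply]
  rw [show (DirectSum.decompose 𝒜 x) = DirectSum.lof ℝ ℕ _ p ⟨x, hx⟩ from by
    rw [DirectSum.lof_eq_of]; exact DirectSum.decompose_coe 𝒜 ⟨x, hx⟩]
  rw [DirectSum.toModule_lof]
  rfl

end Sign

/-- Key step in the proof of Proposition 3.4: if `H` has Property B and `θ` is a
graded derivation of negative degree of the graded tensor product `H ⊗ G`
(axiomatized as a graded algebra `C` with degree-preserving algebra maps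
`f : H → C`, `g : G → C` whose images commute up to Koszul sign, with
`x ⊗ y ↦ f x * g y` a linear bijection and the grading of `C` generated by the
products of homogeneous elements) vanishing on `(H ⊗ G)^1`, then `θ` vanishes
on the subalgebra `H ⊗ 1`, i.e. on the image of `f`. -/
theorem derivation_vanishes_on_first_factor
    {H G C : Type*} [Ring H] [Algebra ℝ H] [Ring G] [Algebra ℝ G]
    [Ring C] [Algebra ℝ C]
    (𝒜 : ℕ → Submodule ℝ H) [GradedAlgebra 𝒜]
    (ℬ : ℕ → Submodule ℝ G) [GradedAlgebra ℬ]
    (𝒞 : ℕ → Submodule ℝ C) [GradedAlgebra 𝒞]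
    (hcommH : ∀ (p q : ℕ) (x y : H), x ∈ 𝒜 p → y ∈ 𝒜 q →
      x * y = ((-1 : ℝ) ^ (p * q)) • (y * x))
    (hcommG : ∀ (p q : ℕ) (x y : G), x ∈ ℬ p → y ∈ ℬ q →
      x * y = ((-1 : ℝ) ^ (p * q)) • (y * x))
    (f : H →ₐ[ℝ] C) (g : G →ₐ[ℝ] C)
    (hf : ∀ p : ℕ, ∀ x ∈ 𝒜 p, f x ∈ 𝒞 p)
    (hg : ∀ q : ℕ, ∀ y ∈ ℬ q, g y ∈ 𝒞 q)
    (hkoszul : ∀ (p q : ℕ) (x : H) (y : G), x ∈ 𝒜 p → y ∈ ℬ q →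
      g y * f x = ((-1 : ℝ) ^ (p * q)) • (f x * g y))
    (hbij : Function.Bijective
      (TensorProduct.lift
        (((LinearMap.mul ℝ C).comp f.toLinearMap).compl₂ g.toLinearMap)))
    (hgrade : ∀ m : ℕ, 𝒞 m =
      ⨆ p : ℕ, ⨆ q : ℕ, ⨆ _ : p + q = m,
        Submodule.span ℝ {z : C | ∃ x ∈ 𝒜 p, ∃ y ∈ ℬ q, z = f x * g y})
    (hH : HasPropertyB 𝒜)
    (k : ℕ) (hk : 1 ≤ k) (θ : C →ₗ[ℝ] C)
    (hθ : IsGradedDerivation 𝒞 k θ)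
    (hθ1 : ∀ z ∈ 𝒞 1, θ z = 0) :
    ∀ x : H, θ (f x) = 0 := by
  classical
  let E : (H ⊗[ℝ] G) ≃ₗ[ℝ] C := LinearEquiv.ofBijective _ hbij
  have hE : ∀ (x : H) (y : G), E (x ⊗ₜ[ℝ] y) = f x * g y := by
    intro x y
    simp [E, LinearEquiv.ofBijective_apply, TensorProduct.lift.tmul]
  have main : ∀ (j : ℕ) (μ : ℬ j →ₗ[ℝ] ℝ) (x : H),
      PhiMap ℬ E j μ (θ (f x)) = 0 := by
    intro j μ
    set θ' : H →ₗ[ℝ] H :=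
      (PhiMap ℬ E j μ ∘ₗ (θ ∘ₗ f.toLinearMap)) ∘ₗ Smap 𝒜 j with hθ'def
    have hθ'x : ∀ (p : ℕ) (x : H), x ∈ 𝒜 p →
        θ' x = ((-1 : ℝ) ^ (j * p)) • PhiMap ℬ E j μ (θ (f x)) := by
      intro p x hx
      rw [hθ'def]
      simp only [LinearMap.comp_apply]
      rw [Smap_coe 𝒜 j hx, map_smul, map_smul, map_smul]
      rfl
    have hder : IsGradedDerivation 𝒜 (k + j) θ' := by
      constructor
      · intro p x hx hkp
        rw [hθ'x p x hx]
        refine Submodule.smul_mem _ _ ?_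
        have h1 : θ (f x) ∈ 𝒞 (p - k) := hθ.mem p (f x) (hf p x hx) (by omega)
        have h2 := PhiMap_grade1 ℬ E j μ 𝒜 𝒞 hE hgrade (p - k) h1
        rwa [Nat.sub_sub] at h2
      · intro p x hx hpk
        rw [hθ'x p x hx]
        rcases lt_or_ge p k with h | h
        · rw [hθ.low p (f x) (hf p x hx) h, map_zero, smul_zero]
        · rw [PhiMap_grade2 ℬ E j μ 𝒜 𝒞 hE hgrade (p - k) (by omega)
            (hθ.mem p (f x) (hf p x hx) h), smul_zero]
      · intro p x hx y
        induction y using DirectSum.Decomposition.inductionOn 𝒜 with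
        | zero => simp
        | @homogeneous q yq =>
          have hy : (yq : H) ∈ 𝒜 q := yq.2
          have hxy : x * (yq : H) ∈ 𝒜 (p + q) := SetLike.mul_mem_graded hx hy
          have hlei := hθ.leibniz p (f x) (hf p x hx) (f (yq : H))
          have hr : PhiMap ℬ E j μ (θ (f x) * f (yq : H)) =
              ((-1 : ℝ) ^ (j * q)) • (PhiMap ℬ E j μ (θ (f x)) * (yq : H)) :=
            PhiMap_right ℬ E j μ hE 𝒜 hkoszul hy _
          have hl : PhiMap ℬ E j μ (f x * θ (f (yq : H))) =
              x * PhiMap ℬ E j μ (θ (f (yq : H))) :=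
            PhiMap_left ℬ E j μ hE x _
          have s1 : ((-1 : ℝ)) ^ (j * (p + q)) * (-1) ^ (j * q) =
              (-1) ^ (j * p) := by
            rw [← pow_add, show j * (p + q) + j * q = j * p + 2 * (j * q) from
              by ring, pow_add, pow_mul]
            norm_num
          have s2 : ((-1 : ℝ)) ^ (j * (p + q)) * (-1) ^ (k * p) =
              (-1) ^ ((k + j) * p) * (-1) ^ (j * q) := by
            rw [← pow_add, ← pow_add]
            congr 1
            ring
          rw [hθ'x (p + q) (x * (yq : H)) hxy, hθ'x p x hx, hθ'x q (yq : H) hy,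
            map_mul, hlei, map_add, map_smul, hr, hl, smul_add, smul_smul,
            smul_smul, s1, s2, smul_mul_assoc, mul_smul_comm, smul_smul]
        | add y₁ y₂ h₁ h₂ =>
          rw [mul_add, map_add, h₁, h₂, map_add, mul_add x (θ' y₁) (θ' y₂),
            smul_add, mul_add (θ' x) y₁ y₂]
          abel
    have hvan : ∀ x ∈ 𝒜 1, θ' x = 0 := by
      intro x hx
      rw [hθ'x 1 x hx, hθ1 (f x) (hf 1 x hx), map_zero, smul_zero]
    have hzero : θ' = 0 := hH (k + j) (by omega) θ' hder hvan
    intro x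
    induction x using DirectSum.Decomposition.inductionOn 𝒜 with
    | zero => simp
    | @homogeneous p xp =>
      have h0 : θ' (xp : H) = 0 := by rw [hzero]; rfl
      rw [hθ'x p (xp : H) xp.2] at h0
      have hne : ((-1 : ℝ) ^ (j * p)) ≠ 0 := pow_ne_zero _ (by norm_num)
      exact (smul_eq_zero.mp h0).resolve_left hne
    | add x₁ x₂ h₁ h₂ =>
      rw [map_add, map_add, map_add, h₁, h₂, add_zero]
  intro x
  have hu : E.symm (θ (f x)) = 0 := by
    refine eq_zero_of_apR_graded ℬ _ (fun j μ => ?_)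
    rw [← PhiMap_apply ℬ E j μ]
    exact main j μ x
  have h2 := congrArg E hu
  rwa [E.apply_symm_apply, E.map_zero] at h2
end

section
/- Let (A, d) be a cochain complex of ℝ-vector spaces, A = ⨁_{p≥0} A^p with d : A^p → A^{p+1}, d∘d = 0. Let B = ⨁_{p≥0} B^p be a graded subspace with d(B^p) ⊆ B^{p+1}, and let e : B^p → A^{p+1} be a degree +1 injective linear map (multiplication by a closed degree-1 element η) satisfying d(e(b)) = −e(d b) for all b ∈ B. Suppose that A^p = B^p ⊕ e(B^{p−1}) (internal direct sum) for every p. Then for every p there is a linear isomorphism H^p(A, d) ≅ H^p(B, d) ⊕ H^{p−1}(B, d). (Abstract form of Corollary 4.x: H^p_η(M) = H^p_1(M) ⊕ [η] ∧ H^{p−1}_1(M), so the cohomology of Ω^*_η(M) depends only on that of Ω^*_1(M).) -/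
set_option synthInstance.maxHeartbeats 1000000
set_option maxHeartbeats 1000000

section Aux

variable {Y Z Y' Z' : Type*}
  [AddCommGroup Y] [Module ℝ Y] [AddCommGroup Z] [Module ℝ Z]
  [AddCommGroup Y'] [Module ℝ Y'] [AddCommGroup Z'] [Module ℝ Z']

/-- Cohomology-style quotients transported along compatible equivalences. -/
noncomputable def cohEquivOfEquiv (g : Y →ₗ[ℝ] Z) (g' : Y' →ₗ[ℝ] Z')
    (S : Submodule ℝ Y) (S' : Submodule ℝ Y') (eY : Y ≃ₗ[ℝ] Y') (eZ : Z ≃ₗ[ℝ] Z')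
    (hg : ∀ y, eZ (g y) = g' (eY y)) (hS : S.map (eY : Y →ₗ[ℝ] Y') = S') :
    (LinearMap.ker g ⧸ Submodule.comap (LinearMap.ker g).subtype S) ≃ₗ[ℝ]
      (LinearMap.ker g' ⧸ Submodule.comap (LinearMap.ker g').subtype S') := by
  have hker : (LinearMap.ker g).map (eY : Y →ₗ[ℝ] Y') = LinearMap.ker g' := by
    ext y'
    constructor
    · rintro ⟨y, hy, rfl⟩
      simp only [LinearMap.mem_ker] at hy ⊢
      rw [LinearEquiv.coe_coe, ← hg, hy, map_zero]
    · intro hy'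
      refine ⟨eY.symm y', ?_, by simp⟩
      simp only [LinearMap.mem_ker] at hy' ⊢
      have := hg (eY.symm y')
      rw [eY.apply_symm_apply, hy'] at this
      exact eZ.injective (by simpa using this)
  let E : LinearMap.ker g ≃ₗ[ℝ] LinearMap.ker g' :=
    (eY.submoduleMap (LinearMap.ker g)).trans (LinearEquiv.ofEq _ _ hker)
  have hE : ∀ x : LinearMap.ker g, ((E x : Y') : Y') = eY (x : Y) := by
    intro x; rfl
  refine Submodule.Quotient.equiv _ _ E ?_
  ext x
  constructor
  · rintro ⟨y, hy, rfl⟩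
    have hyS : (y : Y) ∈ S := hy
    show ((E y : Y') : Y') ∈ S'
    rw [show ((E y : Y') : Y') = eY (y : Y) from rfl, ← hS]
    exact ⟨(y : Y), hyS, rfl⟩
  · intro hx
    have hx' : (x : Y') ∈ S' := hx
    refine ⟨E.symm x, ?_, E.apply_symm_apply x⟩
    show ((E.symm x : Y) : Y) ∈ S
    have hsymm : ((E.symm x : Y) : Y) = eY.symm (x : Y') := by
      have h2 := hE (E.symm x)
      rw [E.apply_symm_apply] at h2
      exact eY.injective (by simp [h2])
    rw [hsymm]
    rw [← hS] at hx'
    obtain ⟨y, hy, hyx⟩ := hx'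
    rw [← hyx]
    simpa using hy

/-- Cohomology-style quotient of a product complex splits as a product. -/
noncomputable def cohProdEquiv (g : Y →ₗ[ℝ] Z) (g' : Y' →ₗ[ℝ] Z')
    (S : Submodule ℝ Y) (S' : Submodule ℝ Y') :
    (LinearMap.ker (g.prodMap g') ⧸
        Submodule.comap (LinearMap.ker (g.prodMap g')).subtype (S.prod S')) ≃ₗ[ℝ]
      (LinearMap.ker g ⧸ Submodule.comap (LinearMap.ker g).subtype S) ×
        (LinearMap.ker g' ⧸ Submodule.comap (LinearMap.ker g').subtype S') := by
  set K := LinearMap.ker (g.prodMap g') with hK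
  have hmem : ∀ x : Y × Y', x ∈ K ↔ g x.1 = 0 ∧ g' x.2 = 0 := by
    intro x
    simp [hK, LinearMap.mem_ker, LinearMap.prodMap_apply, Prod.ext_iff]
  let j1 : K →ₗ[ℝ] LinearMap.ker g :=
    LinearMap.codRestrict _ ((LinearMap.fst ℝ Y Y').comp K.subtype)
      (fun x => by simpa using ((hmem x.1).mp x.2).1)
  let j2 : K →ₗ[ℝ] LinearMap.ker g' :=
    LinearMap.codRestrict _ ((LinearMap.snd ℝ Y Y').comp K.subtype)
      (fun x => by simpa using ((hmem x.1).mp x.2).2)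
  set T := Submodule.comap (LinearMap.ker g).subtype S with hT
  set T' := Submodule.comap (LinearMap.ker g').subtype S' with hT'
  let π : K →ₗ[ℝ] ((LinearMap.ker g ⧸ T) × (LinearMap.ker g' ⧸ T')) :=
    (T.mkQ.comp j1).prod (T'.mkQ.comp j2)
  have hsurj : Function.Surjective π := by
    rintro ⟨z1, z2⟩
    obtain ⟨a, rfl⟩ := T.mkQ_surjective z1
    obtain ⟨b, rfl⟩ := T'.mkQ_surjective z2
    refine ⟨⟨((a : Y), (b : Y')), (hmem _).mpr ⟨a.2, b.2⟩⟩, ?_⟩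
    simp only [π, LinearMap.prod_apply, Pi.prod, LinearMap.comp_apply]
    constructor <;> congr 1
  have hkereq : Submodule.comap K.subtype (S.prod S') = LinearMap.ker π := by
    ext x
    simp only [Submodule.mem_comap, Submodule.coe_subtype, Submodule.mem_prod,
      LinearMap.mem_ker, π, LinearMap.prod_apply, Function.prod, Prod.ext_iff,
      Prod.fst_zero, Prod.snd_zero,
      LinearMap.comp_apply, Submodule.mkQ_apply, Submodule.Quotient.mk_eq_zero,
      hT, hT', j1, j2, LinearMap.codRestrict_apply, LinearMap.fst_apply, LinearMap.snd_apply]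
  exact (Submodule.quotEquivOfEq _ _ hkereq).trans (π.quotKerEquivOfSurjective hsurj)

/-- Negating the differential doesn't change the cohomology quotient. -/
noncomputable def cohNegEquiv (g : Y →ₗ[ℝ] Z) (S : Submodule ℝ Y) :
    (LinearMap.ker (-g) ⧸ Submodule.comap (LinearMap.ker (-g)).subtype S) ≃ₗ[ℝ]
      (LinearMap.ker g ⧸ Submodule.comap (LinearMap.ker g).subtype S) := by
  refine cohEquivOfEquiv (-g) g S S (LinearEquiv.neg ℝ) (LinearEquiv.refl ℝ Z)
    (fun y => by simp) ?_
  ext x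
  constructor
  · rintro ⟨y, hy, rfl⟩
    simpa using S.neg_mem hy
  · intro hx
    exact ⟨-x, S.neg_mem hx, by simp⟩

end Aux

/-- The cohomology of a cochain complex `(X, d)` (indexed over ℕ) in positive
degree `p + 1`: the kernel of `d (p+1)` modulo the image of `d p`. -/
noncomputable abbrev cochainCohomologySucc
    (X : ℕ → Type*) [∀ p, AddCommGroup (X p)] [∀ p, Module ℝ (X p)]
    (d : ∀ p : ℕ, X p →ₗ[ℝ] X (p + 1)) (p : ℕ) :=
  LinearMap.ker (d (p + 1)) ⧸
    Submodule.comap (LinearMap.ker (d (p + 1))).subtype (LinearMap.range (d p))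

/-- Abstract form of Corollary 4.x (`H^p_η(M) = H^p_1(M) ⊕ [η] ∧ H^{p-1}_1(M)`):
let `(A, d)` be a cochain complex of ℝ-vector spaces (indexed over ℕ, so
implicitly `A^p = 0` for `p < 0`), `B ⊆ A` a graded subcomplex, and
`e : B^p → A^(p+1)` a degree `+1` injective linear map with `d(e b) = - e(d b)`
such that `A^p = B^p ⊕ e(B^(p-1))` for every `p` (so `A^0 = B^0`).  Then
`H^p(A) ≅ H^p(B) ⊕ H^(p-1)(B)` for every `p` (the `H^(p-1)(B)` summand being
zero for `p = 0`); the degree `0` cohomologies are the kernels of `d` in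
degree `0`. -/
theorem cohomology_splitting_of_eta_complex
    (A : ℕ → Type*) [∀ p, AddCommGroup (A p)] [∀ p, Module ℝ (A p)]
    (d : ∀ p : ℕ, A p →ₗ[ℝ] A (p + 1))
    (hdd : ∀ (p : ℕ) (x : A p), d (p + 1) (d p x) = 0)
    (B : ∀ p : ℕ, Submodule ℝ (A p))
    (hdB : ∀ p : ℕ, ∀ x ∈ B p, d p x ∈ B (p + 1))
    (e : ∀ p : ℕ, (B p) →ₗ[ℝ] A (p + 1))
    (heinj : ∀ p : ℕ, Function.Injective (e p))
    (hde : ∀ (p : ℕ) (b : B p),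
      d (p + 1) (e p b) = - e (p + 1) ((d p).restrict (hdB p) b))
    (hdisj : ∀ p : ℕ, Disjoint (B (p + 1)) (LinearMap.range (e p)))
    (hsup : ∀ p : ℕ, B (p + 1) ⊔ LinearMap.range (e p) = ⊤)
    (hzero : B 0 = ⊤) :
    Nonempty (LinearMap.ker (d 0) ≃ₗ[ℝ]
        LinearMap.ker ((d 0).restrict (hdB 0))) ∧
    Nonempty (cochainCohomologySucc A d 0 ≃ₗ[ℝ]
        cochainCohomologySucc (fun p => B p) (fun p => (d p).restrict (hdB p)) 0 ×
          LinearMap.ker ((d 0).restrict (hdB 0))) ∧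
    ∀ p : ℕ,
      Nonempty (cochainCohomologySucc A d (p + 1) ≃ₗ[ℝ]
        cochainCohomologySucc (fun p => B p) (fun p => (d p).restrict (hdB p)) (p + 1) ×
          cochainCohomologySucc (fun p => B p) (fun p => (d p).restrict (hdB p)) p) := by
  classical
  -- notation
  set dB : ∀ p : ℕ, (B p) →ₗ[ℝ] (B (p + 1)) := fun p => (d p).restrict (hdB p) with hdBdef
  have hcompl : ∀ q : ℕ, IsCompl (B (q + 1)) (LinearMap.range (e q)) :=
    fun q => ⟨hdisj q, codisjoint_iff.mpr (hsup q)⟩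
  -- the splitting equivalences identifying A^(q+1) with B^(q+1) × B^q
  let ψ : ∀ q : ℕ, ((B (q + 1)) × (B q)) ≃ₗ[ℝ] A (q + 1) := fun q =>
    (LinearEquiv.prodCongr (LinearEquiv.refl ℝ (B (q + 1)))
        (LinearEquiv.ofInjective (e q) (heinj q))).trans
      (Submodule.prodEquivOfIsCompl _ _ (hcompl q))
  have happ : ∀ (q : ℕ) (z : (B (q + 1)) × (LinearMap.range (e q))),
      (Submodule.prodEquivOfIsCompl _ _ (hcompl q)) z
        = (z.1 : A (q + 1)) + (z.2 : A (q + 1)) := by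
    intro q z
    have h2 := Submodule.coe_prodEquivOfIsCompl (B (q + 1)) (LinearMap.range (e q)) (hcompl q)
    calc (Submodule.prodEquivOfIsCompl _ _ (hcompl q)) z
        = ((Submodule.prodEquivOfIsCompl _ _ (hcompl q) :
            (B (q + 1)) × (LinearMap.range (e q)) →ₗ[ℝ] A (q + 1))) z := rfl
      _ = ((B (q + 1)).subtype.coprod (LinearMap.range (e q)).subtype) z := by rw [h2]
      _ = (z.1 : A (q + 1)) + (z.2 : A (q + 1)) := by
          simp [LinearMap.coprod_apply]
  have hψ : ∀ (q : ℕ) (x : (B (q + 1)) × (B q)),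
      ψ q x = (x.1 : A (q + 1)) + e q x.2 := by
    intro q x
    have h1 : ψ q x = (Submodule.prodEquivOfIsCompl _ _ (hcompl q))
        (x.1, LinearEquiv.ofInjective (e q) (heinj q) x.2) := rfl
    rw [h1, happ q]
    simp [LinearEquiv.ofInjective_apply]
  -- the corresponding differential on pairs
  let D : ∀ q : ℕ, ((B (q + 1)) × (B q)) →ₗ[ℝ] ((B (q + 2)) × (B (q + 1))) := fun q =>
    (dB (q + 1)).prodMap (-(dB q))
  have hcomm : ∀ (q : ℕ) (x : (B (q + 1)) × (B q)),
      d (q + 1) (ψ q x) = ψ (q + 1) (D q x) := by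
    intro q x
    rw [hψ, hψ]
    simp only [D, LinearMap.prodMap_apply, LinearMap.neg_apply, map_neg, map_add]
    rw [hde q x.2]
    have : ((dB (q + 1)) x.1 : A (q + 2)) = d (q + 1) (x.1 : A (q + 1)) := by
      simp [hdBdef, LinearMap.restrict_apply]
    rw [this]
  have hcomm' : ∀ (q : ℕ) (y : A (q + 1)),
      (ψ (q + 1)).symm (d (q + 1) y) = D q ((ψ q).symm y) := by
    intro q y
    have := hcomm q ((ψ q).symm y)
    rw [(ψ q).apply_symm_apply] at this
    rw [this, (ψ (q + 1)).symm_apply_apply]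
  refine ⟨?_, ?_, ?_⟩
  · -- degree 0 kernels
    have hmem0 : ∀ x : A 0, x ∈ B 0 := fun x => hzero ▸ Submodule.mem_top
    let m : LinearMap.ker (d 0) →ₗ[ℝ] LinearMap.ker (dB 0) :=
      LinearMap.codRestrict _
        (LinearMap.codRestrict (B 0) ((LinearMap.ker (d 0)).subtype) (fun x => hmem0 x))
        (by
          intro c
          have hc : d 0 (c : A 0) = 0 := c.2
          simp only [LinearMap.mem_ker]
          apply Subtype.ext
          exact hc)
    have hminj : Function.Injective m := by
      intro a b hab
      apply Subtype.ext
      have h2 := congrArg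
        (fun z : ↥(LinearMap.ker (dB 0)) => ((z : ↥(B 0)) : A 0)) hab
      exact h2
    have hmsurj : Function.Surjective m := by
      intro b
      have hb : dB 0 b.1 = 0 := b.2
      have hb' : d 0 ((b.1 : A 0)) = 0 := by
        have h3 : ((dB 0 b.1 : ↥(B 1)) : A 1) = 0 := by rw [hb]; rfl
        exact h3
      refine ⟨⟨(b.1 : A 0), hb'⟩, ?_⟩
      apply Subtype.ext; apply Subtype.ext
      simp [m, LinearMap.codRestrict_apply]
      rfl
    exact ⟨LinearEquiv.ofBijective m ⟨hminj, hmsurj⟩⟩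
  · -- H^1(A) ≅ H^1(B) × ker(dB 0)
    have hS : (LinearMap.range (d 0)).map ((ψ 0).symm : A 1 →ₗ[ℝ] _)
        = (LinearMap.range (dB 0)).prod (⊥ : Submodule ℝ (B 0)) := by
      ext z
      rw [Submodule.mem_map_equiv]
      simp only [LinearEquiv.symm_symm, Submodule.mem_prod, Submodule.mem_bot,
        LinearMap.mem_range]
      constructor
      · rintro ⟨a, ha⟩
        have haB : a ∈ B 0 := hzero ▸ Submodule.mem_top
        have : ψ 0 (dB 0 ⟨a, haB⟩, 0) = ψ 0 z := by
          rw [hψ]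
          simpa [hdBdef, LinearMap.restrict_apply] using ha
        have hz := (ψ 0).injective this
        refine ⟨⟨⟨a, haB⟩, ?_⟩, ?_⟩
        · rw [← hz]
        · rw [← hz]
      · rintro ⟨⟨b, hb⟩, h2⟩
        refine ⟨(b : A 0), ?_⟩
        rw [hψ]
        have h1 : (z.1 : A 1) = d 0 (b : A 0) := by
          rw [← hb]; simp [hdBdef, LinearMap.restrict_apply]
        rw [h2, h1]
        simp
    let E1 := cohEquivOfEquiv (d (0 + 1)) (D 0) (LinearMap.range (d 0))
      ((LinearMap.range (dB 0)).prod (⊥ : Submodule ℝ (B 0)))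
      (ψ 0).symm (ψ 1).symm (hcomm' 0) hS
    let E2 := cohProdEquiv (dB 1) (-(dB 0)) (LinearMap.range (dB 0))
      (⊥ : Submodule ℝ (B 0))
    let E3 := cohNegEquiv (dB 0) (⊥ : Submodule ℝ (B 0))
    have hbot : Submodule.comap (LinearMap.ker (dB 0)).subtype
        (⊥ : Submodule ℝ (B 0)) = ⊥ := by
      simp [Submodule.comap_bot, Submodule.ker_subtype]
    let E4 := Submodule.quotEquivOfEqBot _ hbot
    exact ⟨E1.trans (E2.trans (LinearEquiv.prodCongr (LinearEquiv.refl ℝ _) (E3.trans E4)))⟩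
  · -- higher degrees
    intro p
    have hS : (LinearMap.range (d (p + 1))).map ((ψ (p + 1)).symm : A (p + 2) →ₗ[ℝ] _)
        = (LinearMap.range (dB (p + 1))).prod (LinearMap.range (dB p)) := by
      ext z
      rw [Submodule.mem_map_equiv]
      simp only [LinearEquiv.symm_symm, Submodule.mem_prod, LinearMap.mem_range]
      constructor
      · rintro ⟨a, ha⟩
        obtain ⟨w, rfl⟩ := (ψ p).surjective a
        rw [hcomm p w] at ha
        have hz := (ψ (p + 1)).injective ha
        refine ⟨⟨w.1, ?_⟩, ⟨-w.2, ?_⟩⟩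
        · rw [← hz]; rfl
        · rw [← hz]; simp [D]
      · rintro ⟨⟨b, hb⟩, ⟨c, hc⟩⟩
        refine ⟨ψ p (b, -c), ?_⟩
        rw [hcomm p (b, -c)]
        congr 1
        simp only [D, LinearMap.prodMap_apply, LinearMap.neg_apply, map_neg, neg_neg]
        rw [hb, hc]
    let E1 := cohEquivOfEquiv (d (p + 1 + 1)) (D (p + 1)) (LinearMap.range (d (p + 1)))
      ((LinearMap.range (dB (p + 1))).prod (LinearMap.range (dB p)))
      (ψ (p + 1)).symm (ψ (p + 2)).symm (hcomm' (p + 1)) hS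
    let E2 := cohProdEquiv (dB (p + 2)) (-(dB (p + 1))) (LinearMap.range (dB (p + 1)))
      (LinearMap.range (dB p))
    let E3 := cohNegEquiv (dB (p + 1)) (LinearMap.range (dB p))
    exact ⟨E1.trans (E2.trans (LinearEquiv.prodCongr (LinearEquiv.refl ℝ _) E3))⟩
end
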